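/- arXiv:2306.09717 — 5 statements merged into one kernel-verified Lean document; each statement's English description precedes it below -/
import Mathlib

section
/- Let $F$ be a field and let $(C^a_k)_{k \in \mathbb{Z}}$, $(C^b_k)_{k \in \mathbb{Z}}$ be families of $F$-vector spaces vanishing in negative degrees, equipped with linear maps $\partial^{aa}_k : C^a_k \to C^a_{k-1}$, $\partial^{bb}_k : C^b_k \to C^b_{k-1}$, $\partial^{ab}_k : C^a_k \to C^b_{k-1}$ satisfying, for all $k$: $\partial^{aa}_k \circ \partial^{aa}_{k+1} = 0$, $\partial^{bb}_k \circ \partial^{bb}_{k+1} = 0$, and $\partial^{ab}_k \circ \partial^{aa}_{k+1} + \partial^{bb}_k \circ \partial^{ab}_{k+1} = 0$. Suppose $G^{aa}_* = \{G^{aa}_k : C^a_{k-1} \to C^a_k\}$ and $G^{bb}_* = \{G^{bb}_k : C^b_{k-1} \to C^b_k\}$ are combinatorial propagators for $(C^a_*, \partial^{aa}_*)$ and $(C^b_*, \partial^{bb}_*)$ respectively. Then there exists a family of linear maps $G^{ab}_* = \{G^{ab}_k : C^a_{k-1} \to C^b_k\}$ such that for every $k$: $\partial^{ab}_{k+1}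 \circ G^{aa}_{k+1} + \partial^{bb}_{k+1} \circ G^{ab}_{k+1} + G^{ab}_k \circ \partial^{aa}_k + G^{bb}_k \circ \partial^{ab}_k = 0$. -/
/- STATEMENT 0.
We index the chain complexes by `ℤ` and encode the differential `∂_k : C_k → C_{k-1}`
as `d k : C (k+1) →ₗ[F] C k` (so `d k = ∂_{k+1}`), and a combinatorial propagator
`G_k : C_{k-1} → C_k` as `g k : C k →ₗ[F] C (k+1)` (so `g k = G_{k+1}`).
With this (equivalent) reindexing, the propagator condition
`∂_{k+1} ∘ G_{k+1} + G_k ∘ ∂_k = id_{C_k}` (for all `k`) becomes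
`d (k+1) ∘ g (k+1) + g k ∘ d k = id_{C (k+1)}` (for all `k`), and the mixed identity
`∂^{ab}_{k+1} ∘ G^{aa}_{k+1} + ∂^{bb}_{k+1} ∘ G^{ab}_{k+1} + G^{ab}_k ∘ ∂^{aa}_k
  + G^{bb}_k ∘ ∂^{ab}_k = 0 : C^a_k → C^b_k` (for all `k`) becomes
`dab (k+1) ∘ gaa (k+1) + dbb (k+1) ∘ gab (k+1) + gab k ∘ daa k + gbb k ∘ dab k = 0`
(for all `k`). -/
theorem stmt_0 (F : Type*) [Field F]
    (Ca Cb : ℤ → Type*)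
    [∀ k, AddCommGroup (Ca k)] [∀ k, Module F (Ca k)]
    [∀ k, AddCommGroup (Cb k)] [∀ k, Module F (Cb k)]
    (hCa : ∀ k : ℤ, k < 0 → Subsingleton (Ca k))
    (hCb : ∀ k : ℤ, k < 0 → Subsingleton (Cb k))
    (daa : ∀ k : ℤ, Ca (k + 1) →ₗ[F] Ca k)
    (dbb : ∀ k : ℤ, Cb (k + 1) →ₗ[F] Cb k)
    (dab : ∀ k : ℤ, Ca (k + 1) →ₗ[F] Cb k)
    (hdaa : ∀ k : ℤ, (daa k).comp (daa (k + 1)) = 0)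
    (hdbb : ∀ k : ℤ, (dbb k).comp (dbb (k + 1)) = 0)
    (hdab : ∀ k : ℤ, (dab k).comp (daa (k + 1)) + (dbb k).comp (dab (k + 1)) = 0)
    (gaa : ∀ k : ℤ, Ca k →ₗ[F] Ca (k + 1))
    (gbb : ∀ k : ℤ, Cb k →ₗ[F] Cb (k + 1))
    (hgaa : ∀ k : ℤ,
      (daa (k + 1)).comp (gaa (k + 1)) + (gaa k).comp (daa k) = LinearMap.id)
    (hgbb : ∀ k : ℤ,
      (dbb (k + 1)).comp (gbb (k + 1)) + (gbb k).comp (dbb k) = LinearMap.id) :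
    ∃ gab : ∀ k : ℤ, Ca k →ₗ[F] Cb (k + 1),
      ∀ k : ℤ,
        (dab (k + 1)).comp (gaa (k + 1)) + (dbb (k + 1)).comp (gab (k + 1))
          + (gab k).comp (daa k) + (gbb k).comp (dab k) = 0 := by
  refine ⟨fun k => -((gbb k).comp ((dab k).comp (gaa k))), fun k => ?_⟩
  ext x
  have h1 := LinearMap.congr_fun (hgaa k) x
  have h2 := LinearMap.congr_fun (hgbb k) (dab (k + 1) (gaa (k + 1) x))
  have h3 := LinearMap.congr_fun (hdab k) (gaa (k + 1) x)
  simp only [LinearMap.add_apply, LinearMap.comp_apply, LinearMap.id_apply,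
    LinearMap.zero_apply, LinearMap.neg_apply] at h1 h2 h3 ⊢
  have hx := eq_sub_of_add_eq' h1
  have e2 := eq_sub_of_add_eq h2
  have e3 := eq_neg_of_add_eq_zero_left h3
  rw [map_neg, hx, e2, map_sub, e3, sub_neg_eq_add, map_add]
  abel
end

section
/- Let $F$ be a field and let $(C^a_k)_{k \in \mathbb{Z}}$, $(C^b_k)_{k \in \mathbb{Z}}$ be families of $F$-vector spaces vanishing in negative degrees, equipped with linear maps $\partial^{aa}_k : C^a_k \to C^a_{k-1}$, $\partial^{bb}_k : C^b_k \to C^b_{k-1}$, $\partial^{ab}_k : C^a_k \to C^b_{k-1}$ satisfying, for all $k$: $\partial^{aa}_k \circ \partial^{aa}_{k+1} = 0$, $\partial^{bb}_k \circ \partial^{bb}_{k+1} = 0$, and $\partial^{ab}_k \circ \partial^{aa}_{k+1} + \partial^{bb}_k \circ \partial^{ab}_{k+1} = 0$. Let $G^{aa}_*$ and $G^{bb}_*$ be combinatorial propagators for $(C^a_*, \partial^{aa}_*)$ and $(C^b_*, \partial^{bb}_*)$. Define $G^{ab}_k : C^a_{k-1} \to C^b_k$ recursively by $G^{ab}_k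 = 0$ for $k \le 0$ and $G^{ab}_{k+1} = -\big( G^{bb}_{k+1} \circ \partial^{ab}_{k+1} \circ G^{aa}_{k+1} + G^{bb}_{k+1} \circ G^{ab}_k \circ \partial^{aa}_k + G^{bb}_{k+1} \circ G^{bb}_k \circ \partial^{ab}_k \big)$ for $k \ge 0$. Then for every $k$: $\partial^{ab}_{k+1} \circ G^{aa}_{k+1} + \partial^{bb}_{k+1} \circ G^{ab}_{k+1} + G^{ab}_k \circ \partial^{aa}_k + G^{bb}_k \circ \partial^{ab}_k = 0$; consequently $G_k(x,y) = (G^{aa}_k x, G^{ab}_k x + G^{bb}_k y)$ is a combinatorial propagator for the total complex $C_k = C^a_k \oplus C^b_k$ with $\partial_k(x,y) = (\partial^{aa}_k x, \partial^{ab}_k x + \partial^{bb}_k y)$. -/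
/- STATEMENT 3.
Same reindexing conventions: `d k : C (k+1) →ₗ[F] C k` encodes `∂_{k+1}` and
`g k : C k →ₗ[F] C (k+1)` encodes `G_{k+1}`.  In particular `gab k = G^{ab}_{k+1}`,
so the recursive definition `G^{ab}_k = 0` for `k ≤ 0` reads `gab k = 0` for `k + 1 ≤ 0`,
and the recursion `G^{ab}_{k+1} = -(G^{bb}_{k+1} ∘ ∂^{ab}_{k+1} ∘ G^{aa}_{k+1}
 + G^{bb}_{k+1} ∘ G^{ab}_k ∘ ∂^{aa}_k + G^{bb}_{k+1} ∘ G^{bb}_k ∘ ∂^{ab}_k)` for `k ≥ 0`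
reads (shifting the index by one, `k = i + 1` with `i ≥ -1`) as `hgabrec` below.
Conclusion: the mixed identity holds in every degree and the block map `G` is a
combinatorial propagator for the total complex `(Ca × Cb, D)`. -/
theorem stmt_3 (F : Type*) [Field F]
    (Ca Cb : ℤ → Type*)
    [∀ k, AddCommGroup (Ca k)] [∀ k, Module F (Ca k)]
    [∀ k, AddCommGroup (Cb k)] [∀ k, Module F (Cb k)]
    (hCa : ∀ k : ℤ, k < 0 → Subsingleton (Ca k))
    (hCb : ∀ k : ℤ, k < 0 → Subsingleton (Cb k))
    (daa : ∀ k : ℤ, Ca (k + 1) →ₗ[F] Ca k)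
    (dbb : ∀ k : ℤ, Cb (k + 1) →ₗ[F] Cb k)
    (dab : ∀ k : ℤ, Ca (k + 1) →ₗ[F] Cb k)
    (hdaa : ∀ k : ℤ, (daa k).comp (daa (k + 1)) = 0)
    (hdbb : ∀ k : ℤ, (dbb k).comp (dbb (k + 1)) = 0)
    (hdab : ∀ k : ℤ, (dab k).comp (daa (k + 1)) + (dbb k).comp (dab (k + 1)) = 0)
    (gaa : ∀ k : ℤ, Ca k →ₗ[F] Ca (k + 1))
    (gbb : ∀ k : ℤ, Cb k →ₗ[F] Cb (k + 1))
    (hgaa : ∀ k : ℤ,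
      (daa (k + 1)).comp (gaa (k + 1)) + (gaa k).comp (daa k) = LinearMap.id)
    (hgbb : ∀ k : ℤ,
      (dbb (k + 1)).comp (gbb (k + 1)) + (gbb k).comp (dbb k) = LinearMap.id)
    (gab : ∀ k : ℤ, Ca k →ₗ[F] Cb (k + 1))
    (hgab0 : ∀ k : ℤ, k + 1 ≤ 0 → gab k = 0)
    (hgabrec : ∀ k : ℤ, -1 ≤ k →
      gab (k + 1) =
        -((gbb (k + 1)).comp ((dab (k + 1)).comp (gaa (k + 1)))
          + (gbb (k + 1)).comp ((gab k).comp (daa k))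
          + (gbb (k + 1)).comp ((gbb k).comp (dab k))))
    (D : ∀ k : ℤ, Ca (k + 1) × Cb (k + 1) →ₗ[F] Ca k × Cb k)
    (hD : ∀ (k : ℤ) (x : Ca (k + 1) × Cb (k + 1)),
      D k x = (daa k x.1, dab k x.1 + dbb k x.2))
    (G : ∀ k : ℤ, Ca k × Cb k →ₗ[F] Ca (k + 1) × Cb (k + 1))
    (hG : ∀ (k : ℤ) (x : Ca k × Cb k),
      G k x = (gaa k x.1, gab k x.1 + gbb k x.2)) :
    (∀ k : ℤ,
      (dab (k + 1)).comp (gaa (k + 1)) + (dbb (k + 1)).comp (gab (k + 1))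
        + (gab k).comp (daa k) + (gbb k).comp (dab k) = 0)
    ∧ (∀ k : ℤ, (D (k + 1)).comp (G (k + 1)) + (G k).comp (D k) = LinearMap.id) := by
  have hM : ∀ k : ℤ,
      (dab (k + 1)).comp (gaa (k + 1)) + (dbb (k + 1)).comp (gab (k + 1))
        + (gab k).comp (daa k) + (gbb k).comp (dab k) = 0 := by
    have step : ∀ k : ℤ, -1 ≤ k + 1 →
        ((dab (k + 1)).comp (gaa (k + 1)) + (dbb (k + 1)).comp (gab (k + 1))
          + (gab k).comp (daa k) + (gbb k).comp (dab k) = 0) →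
        ((dab (k + 1 + 1)).comp (gaa (k + 1 + 1)) + (dbb (k + 1 + 1)).comp (gab (k + 1 + 1))
          + (gab (k + 1)).comp (daa (k + 1)) + (gbb (k + 1)).comp (dab (k + 1)) = 0) := by
      intro k hk IH
      ext x
      simp only [LinearMap.add_apply, LinearMap.comp_apply, LinearMap.zero_apply]
      set a := dab (k + 1 + 1) (gaa (k + 1 + 1) x) with ha
      set b := gab (k + 1) (daa (k + 1) x) with hb
      set c := gbb (k + 1) (dab (k + 1) x) with hc
      -- the recursion, pointwise
      have hrec : gab (k + 1 + 1) x = -gbb (k + 1 + 1) (a + b + c) := by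
        have h := DFunLike.congr_fun (hgabrec (k + 1) hk) x
        simp only [LinearMap.neg_apply, LinearMap.add_apply, LinearMap.comp_apply] at h
        rw [h, ← ha, ← hb, ← hc, map_add, map_add]
      -- key: dbb (k+1) (a + b + c) = 0
      have h4 : dab (k + 1) (daa (k + 1 + 1) (gaa (k + 1 + 1) x))
          + dab (k + 1) (gaa (k + 1) (daa (k + 1) x)) = dab (k + 1) x := by
        rw [← map_add]
        have h := DFunLike.congr_fun (hgaa (k + 1)) x
        simp only [LinearMap.add_apply, LinearMap.comp_apply, LinearMap.id_apply] at h
        rw [h]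
      have h1 : dbb (k + 1) a = -dab (k + 1) (daa (k + 1 + 1) (gaa (k + 1 + 1) x)) := by
        have h := DFunLike.congr_fun (hdab (k + 1)) (gaa (k + 1 + 1) x)
        simp only [LinearMap.add_apply, LinearMap.comp_apply, LinearMap.zero_apply] at h
        rw [ha, ← sub_eq_zero, ← h]
        abel
      have h2 : dbb (k + 1) b = -dab (k + 1) (gaa (k + 1) (daa (k + 1) x))
          + gbb k (dbb k (dab (k + 1) x)) := by
        have h := DFunLike.congr_fun IH (daa (k + 1) x)
        simp only [LinearMap.add_apply, LinearMap.comp_apply, LinearMap.zero_apply] at h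
        have hz : daa k (daa (k + 1) x) = 0 := by
          have h' := DFunLike.congr_fun (hdaa k) x
          simpa only [LinearMap.comp_apply, LinearMap.zero_apply] using h'
        have hab : dab k (daa (k + 1) x) = -dbb k (dab (k + 1) x) := by
          have h' := DFunLike.congr_fun (hdab k) x
          simp only [LinearMap.add_apply, LinearMap.comp_apply, LinearMap.zero_apply] at h'
          rw [← sub_eq_zero, ← h']
          abel
        rw [hz, map_zero, hab, map_neg] at h
        rw [hb, ← sub_eq_zero, ← h]
        abel
      have h3 : dbb (k + 1) c = dab (k + 1) x - gbb k (dbb k (dab (k + 1) x)) := by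
        have h := DFunLike.congr_fun (hgbb k) (dab (k + 1) x)
        simp only [LinearMap.add_apply, LinearMap.comp_apply, LinearMap.id_apply] at h
        rw [hc, eq_sub_iff_add_eq]
        exact h
      have hs : dbb (k + 1) (a + b + c) = 0 := by
        rw [map_add, map_add, h1, h2, h3, ← h4]
        abel
      -- finish
      have hT : dbb (k + 1 + 1) (gab (k + 1 + 1) x) = -(a + b + c) := by
        rw [hrec, map_neg, neg_inj]
        have h := DFunLike.congr_fun (hgbb (k + 1)) (a + b + c)
        simp only [LinearMap.add_apply, LinearMap.comp_apply, LinearMap.id_apply] at h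
        rw [hs, map_zero, add_zero] at h
        exact h
      rw [hT]; abel
    intro k
    rcases le_or_gt (-2 : ℤ) k with hk | hk
    · have key : ∀ n : ℤ, -2 ≤ n →
          (dab (n + 1)).comp (gaa (n + 1)) + (dbb (n + 1)).comp (gab (n + 1))
            + (gab n).comp (daa n) + (gbb n).comp (dab n) = 0 := by
        refine fun n hn => Int.le_induction
          (motive := fun n _ => (dab (n + 1)).comp (gaa (n + 1)) + (dbb (n + 1)).comp (gab (n + 1))
            + (gab n).comp (daa n) + (gbb n).comp (dab n) = 0) ?_ ?_ n hn
        · haveI : Subsingleton (Cb (-2 + 1)) := hCb _ (by norm_num)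
          ext x
          exact Subsingleton.elim _ _
        · intro m hm ih
          exact step m (by omega) ih
      exact key k hk
    · haveI : Subsingleton (Cb (k + 1)) := hCb _ (by omega)
      ext x
      exact Subsingleton.elim _ _
  refine ⟨hM, fun k => ?_⟩
  apply LinearMap.ext
  rintro ⟨x, y⟩
  have h1 := DFunLike.congr_fun (hgaa k) x
  simp only [LinearMap.add_apply, LinearMap.comp_apply, LinearMap.id_apply] at h1
  have h2 := DFunLike.congr_fun (hgbb k) y
  simp only [LinearMap.add_apply, LinearMap.comp_apply, LinearMap.id_apply] at h2
  have h3 := DFunLike.congr_fun (hM k) x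
  simp only [LinearMap.add_apply, LinearMap.comp_apply, LinearMap.zero_apply] at h3
  simp only [LinearMap.add_apply, LinearMap.comp_apply, LinearMap.id_apply, hD, hG,
    map_add, Prod.mk_add_mk, Prod.mk.injEq]
  constructor
  · exact h1
  · have hPQ : (dab (k + 1) (gaa (k + 1) x) + dbb (k + 1) (gab (k + 1) x)
        + gab k (daa k x) + gbb k (dab k x))
        + (dbb (k + 1) (gbb (k + 1) y) + gbb k (dbb k y)) = y := by
      rw [h3, h2, zero_add]
    conv_rhs => rw [← hPQ]
    abel
end

section
/- Let $F$ be a field, fix an integer $k \ge 1$, and let $C^a_{k-2}, C^a_{k-1}, C^a_k, C^a_{k+1}, C^b_{k-2}, C^b_{k-1}, C^b_k, C^b_{k+1}$ be $F$-vector spaces with linear maps $\partial^{aa}_j : C^a_j \to C^a_{j-1}$, $\partial^{bb}_j : C^b_j \to C^b_{j-1}$, $\partial^{ab}_j : C^a_j \to C^b_{j-1}$ (for the relevant indices $j$), $G^{aa}_j : C^a_{j-1} \to C^a_j$, $G^{bb}_j : C^b_{j-1} \to C^b_j$, $G^{ab}_j : C^a_{j-1} \to C^b_j$, and an arbitrary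 linear map $\widetilde{G}^{ab}_{k+1} : C^a_k \to C^b_{k+1}$. Assume: (i) $\partial^{aa}_{k-1} \circ \partial^{aa}_k = 0$, $\partial^{bb}_k \circ \partial^{bb}_{k+1} = 0$; (ii) $\partial^{ab}_k \circ \partial^{aa}_{k+1} + \partial^{bb}_k \circ \partial^{ab}_{k+1} = 0$ and $\partial^{ab}_{k-1} \circ \partial^{aa}_k + \partial^{bb}_{k-1} \circ \partial^{ab}_k = 0$; (iii) $\partial^{aa}_{k+1} \circ G^{aa}_{k+1} + G^{aa}_k \circ \partial^{aa}_k = \mathrm{id}_{C^a_k}$ and $\partial^{bb}_k \circ G^{bb}_k + G^{bb}_{k-1} \circ \partial^{bb}_{k-1} = \mathrm{id}_{C^b_{k-1}}$; (iv) the degree-$(k-1)$ mixed identity $\partial^{ab}_k \circ G^{aa}_k + \partial^{bb}_k \circ G^{ab}_k + G^{ab}_{k-1} \circ \partial^{aa}_{k-1} + G^{bb}_{k-1} \circ \partial^{ab}_{k-1} = 0$. Then $G^{bb}_k \circ \partial^{bb}_k \circ \big( \partial^{ab}_{k+1} \circ G^{aa}_{k+1} + \partial^{bb}_{k+1} \circ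 \widetilde{G}^{ab}_{k+1} + G^{ab}_k \circ \partial^{aa}_k + G^{bb}_k \circ \partial^{ab}_k \big) = 0$. -/
/- STATEMENT 5.
The degree `k ≥ 1` is fixed, so the relevant vector spaces are given abstractly:
`Cam2 = C^a_{k-2}`, `Cam1 = C^a_{k-1}`, `Cak = C^a_k`, `Cap1 = C^a_{k+1}`, and
similarly on the `b`-side.  Maps are indexed as in the paper
(`daam1 = ∂^{aa}_{k-1}`, `gbbm1 = G^{bb}_{k-1}`, `Gt = G̃^{ab}_{k+1}`, etc.). -/
theorem stmt_5 (F : Type*) [Field F] (k : ℤ) (hk : 1 ≤ k)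
    (Cam2 Cam1 Cak Cap1 Cbm2 Cbm1 Cbk Cbp1 : Type*)
    [AddCommGroup Cam2] [Module F Cam2] [AddCommGroup Cam1] [Module F Cam1]
    [AddCommGroup Cak] [Module F Cak] [AddCommGroup Cap1] [Module F Cap1]
    [AddCommGroup Cbm2] [Module F Cbm2] [AddCommGroup Cbm1] [Module F Cbm1]
    [AddCommGroup Cbk] [Module F Cbk] [AddCommGroup Cbp1] [Module F Cbp1]
    (daam1 : Cam1 →ₗ[F] Cam2) (daak : Cak →ₗ[F] Cam1) (daap1 : Cap1 →ₗ[F] Cak)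
    (dbbm1 : Cbm1 →ₗ[F] Cbm2) (dbbk : Cbk →ₗ[F] Cbm1) (dbbp1 : Cbp1 →ₗ[F] Cbk)
    (dabm1 : Cam1 →ₗ[F] Cbm2) (dabk : Cak →ₗ[F] Cbm1) (dabp1 : Cap1 →ₗ[F] Cbk)
    (gaak : Cam1 →ₗ[F] Cak) (gaap1 : Cak →ₗ[F] Cap1)
    (gbbm1 : Cbm2 →ₗ[F] Cbm1) (gbbk : Cbm1 →ₗ[F] Cbk)
    (gabm1 : Cam2 →ₗ[F] Cbm1) (gabk : Cam1 →ₗ[F] Cbk)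
    (Gt : Cak →ₗ[F] Cbp1)
    -- (i) chain complex relations
    (hdaa : daam1.comp daak = 0)
    (hdbb : dbbk.comp dbbp1 = 0)
    -- (ii) mixed chain relations
    (hdab1 : dabk.comp daap1 + dbbk.comp dabp1 = 0)
    (hdab2 : dabm1.comp daak + dbbm1.comp dabk = 0)
    -- (iii) propagator relations
    (hgaa : daap1.comp gaap1 + gaak.comp daak = LinearMap.id)
    (hgbb : dbbk.comp gbbk + gbbm1.comp dbbm1 = LinearMap.id)
    -- (iv) degree-(k-1) mixed identity
    (hmix : dabk.comp gaak + dbbk.comp gabk + gabm1.comp daam1 + gbbm1.comp dabm1 = 0) :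
    gbbk.comp (dbbk.comp
      (dabp1.comp gaap1 + dbbp1.comp Gt + gabk.comp daak + gbbk.comp dabk)) = 0 := by
  ext x
  simp only [LinearMap.comp_apply, LinearMap.add_apply, LinearMap.zero_apply, map_add]
  have h1 := LinearMap.congr_fun hdab1 (gaap1 x)
  have h2 := LinearMap.congr_fun hgaa x
  have h3 := LinearMap.congr_fun hmix (daak x)
  have h4 := LinearMap.congr_fun hdaa x
  have h5 := LinearMap.congr_fun hdab2 x
  have h6 := LinearMap.congr_fun hgbb (dabk x)
  have h7 := LinearMap.congr_fun hdbb (Gt x)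
  simp only [LinearMap.comp_apply, LinearMap.add_apply, LinearMap.zero_apply,
    LinearMap.id_apply] at h1 h2 h3 h4 h5 h6 h7
  have key : dbbk (dabp1 (gaap1 x)) + dbbk (dbbp1 (Gt x)) + dbbk (gabk (daak x))
      + dbbk (gbbk (dabk x)) = 0 := by
    have e1 : dbbk (dabp1 (gaap1 x)) = -dabk (daap1 (gaap1 x)) := by
      linear_combination (norm := module) h1
    have e2 : daap1 (gaap1 x) = x - gaak (daak x) := by
      linear_combination (norm := module) h2
    have e3 : dbbk (gabk (daak x)) = -dabk (gaak (daak x)) - gabm1 (daam1 (daak x))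
        - gbbm1 (dabm1 (daak x)) := by
      linear_combination (norm := module) h3
    have e5 : dabm1 (daak x) = -dbbm1 (dabk x) := by
      linear_combination (norm := module) h5
    have e6 : dbbk (gbbk (dabk x)) = dabk x - gbbm1 (dbbm1 (dabk x)) := by
      linear_combination (norm := module) h6
    rw [e1, e2, e3, e5, e6, h4, h7, map_sub, map_neg]
    simp only [map_zero]
    module
  simpa using congrArg gbbk key
end

section
/- Let $F$ be a field and let $(C^a_k)_{k \in \mathbb{Z}}$, $(C^b_k)_{k \in \mathbb{Z}}$ be families of $F$-vector spaces vanishing in negative degrees, equipped with linear maps $\partial^{aa}_k : C^a_k \to C^a_{k-1}$, $\partial^{bb}_k : C^b_k \to C^b_{k-1}$, $\partial^{ab}_k : C^a_k \to C^b_{k-1}$ satisfying, for all $k$: $\partial^{aa}_k \circ \partial^{aa}_{k+1} = 0$, $\partial^{bb}_k \circ \partial^{bb}_{k+1} = 0$, and $\partial^{ab}_k \circ \partial^{aa}_{k+1} + \partial^{bb}_k \circ \partial^{ab}_{k+1} = 0$. Let $G^{aa}_*$ and $G^{bb}_*$ be combinatorial propagators for $(C^a_*, \partial^{aa}_*)$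 and $(C^b_*, \partial^{bb}_*)$. Fix $k \ge 0$ and suppose the maps $G^{ab}_{k-1} : C^a_{k-2} \to C^b_{k-1}$ and $G^{ab}_k : C^a_{k-1} \to C^b_k$ satisfy the degree-$(k-1)$ mixed identity $\partial^{ab}_k \circ G^{aa}_k + \partial^{bb}_k \circ G^{ab}_k + G^{ab}_{k-1} \circ \partial^{aa}_{k-1} + G^{bb}_{k-1} \circ \partial^{ab}_{k-1} = 0$. Then $G^{ab}_{k+1} := -\big( G^{bb}_{k+1} \circ \partial^{ab}_{k+1} \circ G^{aa}_{k+1} + G^{bb}_{k+1} \circ G^{ab}_k \circ \partial^{aa}_k + G^{bb}_{k+1} \circ G^{bb}_k \circ \partial^{ab}_k \big)$ satisfies the degree-$k$ mixed identity $\partial^{ab}_{k+1} \circ G^{aa}_{k+1} + \partial^{bb}_{k+1} \circ G^{ab}_{k+1} + G^{ab}_k \circ \partial^{aa}_k + G^{bb}_k \circ \partial^{ab}_k = 0$. -/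
/- STATEMENT 6.
Same reindexing conventions for the ℤ-indexed families: `d i : C (i+1) →ₗ[F] C i`
encodes `∂_{i+1}` and `g i : C i →ₗ[F] C (i+1)` encodes `G_{i+1}`.
The fixed degree `k ≥ 0` is written as `k = j + 2` (hypothesis `hjk`), so that the
relevant indices `k-2, k-1, k, k+1` are `j, j+1, j+1+1, j+1+1+1` (written as iterated
successors so that the dependently-typed compositions match).  In particular
`gab1 = G^{ab}_{k-1} : C^a_{k-2} → C^b_{k-1}`, `gab2 = G^{ab}_k : C^a_{k-1} → C^b_k`,
the hypothesis `hmix` is the degree-(k-1) mixed identity, `gab3 = G^{ab}_{k+1}` is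
defined by the recursion formula (`hgab3`), and the conclusion is the degree-k
mixed identity. -/
theorem stmt_6 (F : Type*) [Field F]
    (Ca Cb : ℤ → Type*)
    [∀ i, AddCommGroup (Ca i)] [∀ i, Module F (Ca i)]
    [∀ i, AddCommGroup (Cb i)] [∀ i, Module F (Cb i)]
    (hCa : ∀ i : ℤ, i < 0 → Subsingleton (Ca i))
    (hCb : ∀ i : ℤ, i < 0 → Subsingleton (Cb i))
    (daa : ∀ i : ℤ, Ca (i + 1) →ₗ[F] Ca i)
    (dbb : ∀ i : ℤ, Cb (i + 1) →ₗ[F] Cb i)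
    (dab : ∀ i : ℤ, Ca (i + 1) →ₗ[F] Cb i)
    (hdaa : ∀ i : ℤ, (daa i).comp (daa (i + 1)) = 0)
    (hdbb : ∀ i : ℤ, (dbb i).comp (dbb (i + 1)) = 0)
    (hdab : ∀ i : ℤ, (dab i).comp (daa (i + 1)) + (dbb i).comp (dab (i + 1)) = 0)
    (gaa : ∀ i : ℤ, Ca i →ₗ[F] Ca (i + 1))
    (gbb : ∀ i : ℤ, Cb i →ₗ[F] Cb (i + 1))
    (hgaa : ∀ i : ℤ,
      (daa (i + 1)).comp (gaa (i + 1)) + (gaa i).comp (daa i) = LinearMap.id)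
    (hgbb : ∀ i : ℤ,
      (dbb (i + 1)).comp (gbb (i + 1)) + (gbb i).comp (dbb i) = LinearMap.id)
    (k j : ℤ) (hk : 0 ≤ k) (hjk : k = j + 2)
    (gab1 : Ca j →ₗ[F] Cb (j + 1))
    (gab2 : Ca (j + 1) →ₗ[F] Cb (j + 1 + 1))
    (hmix : (dab (j + 1)).comp (gaa (j + 1)) + (dbb (j + 1)).comp gab2
        + gab1.comp (daa j) + (gbb j).comp (dab j) = 0)
    (gab3 : Ca (j + 1 + 1) →ₗ[F] Cb (j + 1 + 1 + 1))
    (hgab3 : gab3 =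
      -((gbb (j + 1 + 1)).comp ((dab (j + 1 + 1)).comp (gaa (j + 1 + 1)))
        + (gbb (j + 1 + 1)).comp (gab2.comp (daa (j + 1)))
        + (gbb (j + 1 + 1)).comp ((gbb (j + 1)).comp (dab (j + 1))))) :
    (dab (j + 1 + 1)).comp (gaa (j + 1 + 1)) + (dbb (j + 1 + 1)).comp gab3
      + gab2.comp (daa (j + 1)) + (gbb (j + 1)).comp (dab (j + 1)) = 0 := by
  subst hgab3
  ext x
  simp only [LinearMap.add_apply, LinearMap.comp_apply, LinearMap.neg_apply,
    LinearMap.zero_apply, map_add, map_neg]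
  set z := gaa (j + 1 + 1) x with hz
  set v := daa (j + 1) x with hv
  set w := dab (j + 1) x with hw
  set A := dab (j + 1 + 1) z with hA
  set B := gab2 v with hB
  set C := gbb (j + 1) w with hC
  -- pointwise hypotheses
  have h4 := LinearMap.congr_fun (hdab (j + 1)) z
  have h7 := LinearMap.congr_fun hmix v
  have h2 := LinearMap.congr_fun (hgbb j) w
  have h3 := LinearMap.congr_fun (hgaa (j + 1)) x
  have h5 := LinearMap.congr_fun (hdab j) x
  have h6 := LinearMap.congr_fun (hdaa j) x
  simp only [LinearMap.add_apply, LinearMap.comp_apply, LinearMap.zero_apply,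
    LinearMap.id_apply] at h4 h7 h2 h3 h5 h6
  -- h3 : daa (j+1+1) z + gaa (j+1) v = x ; apply dab (j+1)
  have h3' : dab (j + 1) (daa (j + 1 + 1) z) + dab (j + 1) (gaa (j + 1) v) = w := by
    rw [hw, ← h3, map_add]
  -- h5 : dab j v + dbb j w = 0 ; apply gbb j
  have h5' : gbb j (dab j v) + gbb j (dbb j w) = 0 := by
    have := congrArg (gbb j) h5
    rwa [map_add, map_zero] at this
  -- key : dbb (j+1) A + dbb (j+1) B + dbb (j+1) C = 0
  have key : dbb (j + 1) A + dbb (j + 1) B + dbb (j + 1) C = 0 := by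
    have e : dbb (j + 1) A + dbb (j + 1) B + dbb (j + 1) C
        = (dab (j + 1) (daa (j + 1 + 1) z) + dbb (j + 1) A)
          + (dab (j + 1) (gaa (j + 1) v) + dbb (j + 1) B + gab1 (daa j v)
              + gbb j (dab j v))
          + (dbb (j + 1) C + gbb j (dbb j w))
          - (dab (j + 1) (daa (j + 1 + 1) z) + dab (j + 1) (gaa (j + 1) v))
          - gab1 (daa j v)
          - (gbb j (dab j v) + gbb j (dbb j w)) := by abel
    rw [e, h4, h7, h2, h3', h6, h5', map_zero]
    abel
  have key' : gbb (j + 1) (dbb (j + 1) A) + gbb (j + 1) (dbb (j + 1) B)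
      + gbb (j + 1) (dbb (j + 1) C) = 0 := by
    have := congrArg (gbb (j + 1)) key
    rwa [map_add, map_add, map_zero] at this
  have E : ∀ T : Cb (j + 1 + 1),
      dbb (j + 1 + 1) (gbb (j + 1 + 1) T) + gbb (j + 1) (dbb (j + 1) T) = T := by
    intro T
    have := LinearMap.congr_fun (hgbb (j + 1)) T
    simpa using this
  have e2 : A - (dbb (j + 1 + 1) (gbb (j + 1 + 1) A)
        + dbb (j + 1 + 1) (gbb (j + 1 + 1) B)
        + dbb (j + 1 + 1) (gbb (j + 1 + 1) C)) + B + C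
      = (A + B + C)
        - ((dbb (j + 1 + 1) (gbb (j + 1 + 1) A) + gbb (j + 1) (dbb (j + 1) A))
          + (dbb (j + 1 + 1) (gbb (j + 1 + 1) B) + gbb (j + 1) (dbb (j + 1) B))
          + (dbb (j + 1 + 1) (gbb (j + 1 + 1) C) + gbb (j + 1) (dbb (j + 1) C)))
        + (gbb (j + 1) (dbb (j + 1) A) + gbb (j + 1) (dbb (j + 1) B)
          + gbb (j + 1) (dbb (j + 1) C)) := by abel
  have goal_eq : A - (dbb (j + 1 + 1) (gbb (j + 1 + 1) A)
        + dbb (j + 1 + 1) (gbb (j + 1 + 1) B)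
        + dbb (j + 1 + 1) (gbb (j + 1 + 1) C)) + B + C = 0 := by
    rw [e2, E A, E B, E C, key']
    abel
  convert goal_eq using 2 <;> abel
end

section
/- Let $F$ be a field, $V$ an $F$-vector space, and $a : V \to V$ an invertible linear map such that $\mathrm{id} - a$ is invertible (hence $\mathrm{id} - a^{-1}$ is invertible). Let $c : V \to V$ be an arbitrary linear map. Consider the sequence of vector spaces $C_3 = V$, $C_2 = V \oplus V$, $C_1 = V$ (and $C_k = 0$ otherwise) with linear maps $\partial_3 : C_3 \to C_2$, $\partial_3(x) = ((\mathrm{id}-a)x,\ c\,x)$, and $\partial_2 : C_2 \to C_1$, $\partial_2(x,y) = -(\mathrm{id}-a^{-1})\,c\,(\mathrm{id}-a)^{-1} x + (\mathrm{id}-a^{-1})\,y$. Then: (1) $\partial_2 \circ \partial_3 = 0$, so this is a chain complex; and (2) the maps $G_3 : C_2 \to C_3$, $G_3(x,y) = (\mathrm{id}-a)^{-1} x$, $G_2 : C_1 \to C_2$, $G_2(z) = (0,\ (\mathrm{id}-a^{-1})^{-1} z)$, and $G_k = 0$ for all other $k$, form a combinatorial propagator for this complex, i.e. $\partial_{k+1}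 \circ G_{k+1} + G_k \circ \partial_k = \mathrm{id}_{C_k}$ for all $k$. -/
/- STATEMENT 8.
The complex of the Example of Section 3.1: `C₃ = V`, `C₂ = V × V`, `C₁ = V`
(all other terms zero), with `∂₃ x = ((1 - a) x, c x)` and
`∂₂ (x, y) = -((1 - a⁻¹) (c ((1 - a)⁻¹ x))) + (1 - a⁻¹) y`, where `a` is an invertible
endomorphism with `1 - a` invertible (inverses expressed via `Ring.inverse` in
`Module.End F V`).  Claims: `∂₂ ∘ ∂₃ = 0` and the maps `G₃ (x, y) = (1 - a)⁻¹ x`,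
`G₂ z = (0, (1 - a⁻¹)⁻¹ z)` (and `0` elsewhere) form a combinatorial propagator,
i.e. `G₃ ∘ ∂₃ = id` (degree 3), `∂₃ ∘ G₃ + G₂ ∘ ∂₂ = id` (degree 2) and
`∂₂ ∘ G₂ = id` (degree 1); in all other degrees the propagator identity is trivial
since the spaces vanish. -/
theorem stmt_8 (F V : Type*) [Field F] [AddCommGroup V] [Module F V]
    (a : Module.End F V) (ha : IsUnit a) (h1a : IsUnit (1 - a))
    (c : Module.End F V)
    (d3 : V →ₗ[F] V × V)
    (hd3 : ∀ x : V, d3 x = ((1 - a) x, c x))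
    (d2 : V × V →ₗ[F] V)
    (hd2 : ∀ p : V × V,
      d2 p = -((1 - Ring.inverse a) (c (Ring.inverse (1 - a) p.1)))
        + (1 - Ring.inverse a) p.2)
    (G3 : V × V →ₗ[F] V)
    (hG3 : ∀ p : V × V, G3 p = Ring.inverse (1 - a) p.1)
    (G2 : V →ₗ[F] V × V)
    (hG2 : ∀ z : V, G2 z = (0, Ring.inverse (1 - Ring.inverse a) z)) :
    d2.comp d3 = 0 ∧
    G3.comp d3 = LinearMap.id ∧
    d3.comp G3 + G2.comp d2 = LinearMap.id ∧
    d2.comp G2 = LinearMap.id := by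
  have hinv : IsUnit (1 - Ring.inverse a) := by
    have heq : (1 : Module.End F V) - Ring.inverse a = Ring.inverse a * -(1 - a) := by
      rw [mul_neg, mul_sub, mul_one, Ring.inverse_mul_cancel _ ha, neg_sub]
    rw [heq]
    exact (isUnit_ringInverse.mpr ha).mul h1a.neg
  have key1 : ∀ x : V, Ring.inverse (1 - a) ((1 - a) x) = x := by
    intro x
    rw [← Module.End.mul_apply, Ring.inverse_mul_cancel _ h1a, Module.End.one_apply]
  have key2 : ∀ x : V, (1 - a) (Ring.inverse (1 - a) x) = x := by
    intro x
    rw [← Module.End.mul_apply, Ring.mul_inverse_cancel _ h1a, Module.End.one_apply]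
  have key3 : ∀ x : V, Ring.inverse (1 - Ring.inverse a) ((1 - Ring.inverse a) x) = x := by
    intro x
    rw [← Module.End.mul_apply, Ring.inverse_mul_cancel _ hinv, Module.End.one_apply]
  have key4 : ∀ x : V, (1 - Ring.inverse a) (Ring.inverse (1 - Ring.inverse a) x) = x := by
    intro x
    rw [← Module.End.mul_apply, Ring.mul_inverse_cancel _ hinv, Module.End.one_apply]
  refine ⟨?_, ?_, ?_, ?_⟩
  · refine LinearMap.ext fun x => ?_
    simp only [LinearMap.comp_apply, LinearMap.zero_apply, hd3, hd2]
    simp only [key1, neg_add_cancel]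
  · refine LinearMap.ext fun x => ?_
    simp only [LinearMap.comp_apply, LinearMap.id_apply, hd3, hG3]
    simp only [key1]
  · refine LinearMap.ext fun p => ?_
    simp only [LinearMap.add_apply, LinearMap.comp_apply, LinearMap.id_apply,
      hd3, hd2, hG3, hG2]
    simp only [map_add, map_neg, key2, key3, Prod.mk_add_mk, zero_add, add_zero,
      neg_add_cancel_left, add_neg_cancel_left, Prod.mk.eta]
  · refine LinearMap.ext fun z => ?_
    simp only [LinearMap.comp_apply, LinearMap.id_apply, hG2, hd2]
    simp only [map_zero, neg_zero, zero_add, key4]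
end
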